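/- Let V be a real separable Hilbert space with orthonormal basis (e_k)_{k≥1}, let (λ_k)_{k≥1} be strictly positive real numbers, and let μ be a σ-finite Borel measure on V. Then for all integers 1 ≤ m ≤ n: ∫_V max_{m≤k≤n} ( log⁺|⟨u,e_k⟩| / λ_k ) μ(du) ≤ ∫₀^∞ ∫_V ( ( ∑_{k=m}^n e^{−2λ_k s} ⟨u,e_k⟩² ) ∧ 1 ) μ(du) ds, where both sides are allowed to take the value +∞. -/

import Mathlib

set_option maxHeartbeats 1000000


open MeasureTheory Filter Topology
open scoped RealInnerProductSpace ENNReal NNReal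

/-- For `1 ≤ m ≤ n`,
`∫ max_{m≤k≤n} log⁺|⟨u,e_k⟩|/λ_k μ(du)
  ≤ ∫₀^∞ ∫ ((∑_{k=m}^n e^{-2λ_k s}⟨u,e_k⟩²) ∧ 1) μ(du) ds`,
where both sides may be `+∞`. -/
theorem stmt14
    {V : Type*}
    [NormedAddCommGroup V] [InnerProductSpace ℝ V] [CompleteSpace V] [SecondCountableTopology V]
    [MeasurableSpace V] [BorelSpace V]
    (e : ℕ → V) (he : Orthonormal ℝ e)
    (lam : ℕ → ℝ) (hpos : ∀ k, 0 < lam k)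
    (μ : Measure V) [SigmaFinite μ]
    (m n : ℕ) (hm : 1 ≤ m) (hmn : m ≤ n) :
    (∫⁻ u, (((Finset.Icc m n).sup fun k =>
        Real.toNNReal (Real.log (max |⟪u, e k⟫| 1) / lam k) : ℝ≥0) : ℝ≥0∞) ∂μ)
      ≤ ∫⁻ s in Set.Ioi (0 : ℝ), ∫⁻ u,
          ENNReal.ofReal (min (∑ k ∈ Finset.Icc m n,
            Real.exp (-(2 * lam k * s)) * ⟪u, e k⟫ ^ 2) 1) ∂μ := by
  classical
  set F : ℝ → V → ℝ≥0∞ := fun s u => ENNReal.ofReal (min (∑ k ∈ Finset.Icc m n,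
      Real.exp (-(2 * lam k * s)) * ⟪u, e k⟫ ^ 2) 1) with hF
  have hcont : Continuous fun p : ℝ × V => F p.1 p.2 := by
    apply ENNReal.continuous_ofReal.comp
    apply Continuous.min _ continuous_const
    apply continuous_finset_sum
    intro k _
    have h1 : Continuous fun p : ℝ × V => Real.exp (-(2 * lam k * p.1)) :=
      Real.continuous_exp.comp ((continuous_const.mul continuous_fst).neg)
    have h2 : Continuous fun p : ℝ × V => ⟪p.2, e k⟫ :=
      Continuous.inner continuous_snd continuous_const
    exact h1.mul (h2.pow 2)
  have hswap : (∫⁻ s in Set.Ioi (0 : ℝ), ∫⁻ u, F s u ∂μ)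
      = ∫⁻ u, (∫⁻ s in Set.Ioi (0 : ℝ), F s u) ∂μ :=
    lintegral_lintegral_swap hcont.measurable.aemeasurable
  rw [show (∫⁻ s in Set.Ioi (0 : ℝ), ∫⁻ u,
      ENNReal.ofReal (min (∑ k ∈ Finset.Icc m n,
        Real.exp (-(2 * lam k * s)) * ⟪u, e k⟫ ^ 2) 1) ∂μ)
      = ∫⁻ s in Set.Ioi (0 : ℝ), ∫⁻ u, F s u ∂μ from rfl, hswap]
  apply lintegral_mono
  intro u
  dsimp only
  set M : ℝ≥0 := (Finset.Icc m n).sup fun k =>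
    Real.toNNReal (Real.log (max |⟪u, e k⟫| 1) / lam k) with hM
  rcases eq_or_ne M 0 with h0 | h0
  · rw [show ((M : ℝ≥0) : ℝ≥0∞) = 0 by rw [h0]; rfl]
    exact zero_le
  obtain ⟨j, hj, hjeq⟩ := Finset.exists_mem_eq_sup (Finset.Icc m n)
    ⟨m, Finset.mem_Icc.mpr ⟨le_refl m, hmn⟩⟩
    (fun k => Real.toNNReal (Real.log (max |⟪u, e k⟫| 1) / lam k))
  have hMeq : M = Real.toNNReal (Real.log (max |⟪u, e j⟫| 1) / lam j) := hjeq
  have ha : 0 < Real.log (max |⟪u, e j⟫| 1) / lam j := by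
    rw [← Real.toNNReal_pos, ← hMeq]
    exact zero_lt_iff.mpr h0
  have hc : (M : ℝ) = Real.log (max |⟪u, e j⟫| 1) / lam j := by
    rw [hMeq, Real.coe_toNNReal _ ha.le]
  have hlog : 0 < Real.log (max |⟪u, e j⟫| 1) := by
    have := mul_pos ha (hpos j)
    rwa [div_mul_cancel₀ _ (hpos j).ne'] at this
  have hx : 1 < |⟪u, e j⟫| := by
    by_contra hle
    push_neg at hle
    rw [max_eq_right hle, Real.log_one] at hlog
    exact lt_irrefl 0 hlog
  have hmax : max |⟪u, e j⟫| 1 = |⟪u, e j⟫| := max_eq_left hx.le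
  have key : ∀ s ∈ Set.Ioo (0 : ℝ) (M : ℝ), F s u = 1 := by
    intro s hs
    have hxpos : (0 : ℝ) < |⟪u, e j⟫| := lt_trans one_pos hx
    have hsq : ⟪u, e j⟫ ^ 2 = Real.exp (2 * Real.log |⟪u, e j⟫|) := by
      calc ⟪u, e j⟫ ^ 2 = |⟪u, e j⟫| ^ 2 := (sq_abs _).symm
        _ = Real.exp (Real.log |⟪u, e j⟫|) ^ 2 := by rw [Real.exp_log hxpos]
        _ = Real.exp (2 * Real.log |⟪u, e j⟫|) := by rw [sq, ← Real.exp_add, two_mul]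
    have hlogval : Real.log |⟪u, e j⟫| = lam j * (M : ℝ) := by
      rw [hc, hmax, mul_div_cancel₀ _ (hpos j).ne']
    have h1 : (1 : ℝ) ≤ Real.exp (-(2 * lam j * s)) * ⟪u, e j⟫ ^ 2 := by
      rw [hsq, hlogval, ← Real.exp_add]
      have hge : (0 : ℝ) ≤ -(2 * lam j * s) + 2 * (lam j * (M : ℝ)) := by
        nlinarith [hpos j, hs.1, hs.2]
      calc (1 : ℝ) = Real.exp 0 := Real.exp_zero.symm
        _ ≤ _ := Real.exp_le_exp.mpr hge
    have hsum : (1 : ℝ) ≤ ∑ k ∈ Finset.Icc m n,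
        Real.exp (-(2 * lam k * s)) * ⟪u, e k⟫ ^ 2 :=
      le_trans h1 (Finset.single_le_sum (f := fun k => Real.exp (-(2 * lam k * s)) * ⟪u, e k⟫ ^ 2) (fun k _ => by positivity) hj)
    simp [hF, min_eq_right hsum, hsum]
  calc ((M : ℝ≥0) : ℝ≥0∞) = ENNReal.ofReal (M : ℝ) := ENNReal.ofReal_coe_nnreal.symm
    _ = volume (Set.Ioo (0 : ℝ) (M : ℝ)) := by rw [Real.volume_Ioo, sub_zero]
    _ = ∫⁻ _ in Set.Ioo (0 : ℝ) (M : ℝ), 1 := (setLIntegral_one _).symm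
    _ = ∫⁻ s in Set.Ioo (0 : ℝ) (M : ℝ), F s u :=
        setLIntegral_congr_fun measurableSet_Ioo (fun s hs => (key s hs).symm)
    _ ≤ ∫⁻ s in Set.Ioi (0 : ℝ), F s u := lintegral_mono_set fun s hs => hs.1
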